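/- Let r : [0,1] → ℝ be continuous and positive and let γ > 0 be such that for every p ∈ [0,1], r(p) + ∫_{1−p}^{1} (1−x)/r(x) dx ≤ γ. Then there exists a continuous positive function f : [0,1] → ℝ such that for every p ∈ [0,1], f(p) + ∫_{1−p}^{1} (1−x)/f(x) dx = γ. -/

import Mathlib

open MeasureTheory Set Filter Topology

/-- Clamp a real number to `[0,1]`. -/
noncomputable def OCclamp (p : ℝ) : ℝ := max 0 (min 1 p)

lemma OCclamp_mem (p : ℝ) : OCclamp p ∈ Set.Icc (0:ℝ) 1 := by
  constructor
  · exact le_max_left _ _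
  · exact max_le (by norm_num) (min_le_left _ _)

lemma OCclamp_eq {p : ℝ} (hp : p ∈ Set.Icc (0:ℝ) 1) : OCclamp p = p := by
  unfold OCclamp
  rw [min_eq_right hp.2, max_eq_right hp.1]

lemma OCclamp_cont : Continuous OCclamp :=
  continuous_const.max (continuous_const.min continuous_id)

/-- The iteration sequence for the optimality condition lemma. -/
noncomputable def OCseq (r : ℝ → ℝ) (γ : ℝ) : ℕ → ℝ → ℝ
  | 0 => fun p => r (OCclamp p)
  | n+1 => fun p => γ - ∫ x in (1 - OCclamp p)..1, (1 - x) / OCseq r γ n x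

/-- Optimality-condition lemma (Lemma 4): if `r` is continuous and positive on
`[0,1]` and `r p + ∫_{1-p}^1 (1-x)/r x dx ≤ γ` for all `p ∈ [0,1]`, then there is
a continuous positive `f` on `[0,1]` with `f p + ∫_{1-p}^1 (1-x)/f x dx = γ`
for all `p ∈ [0,1]`. -/
theorem optimality_condition (r : ℝ → ℝ)
    (hrc : ContinuousOn r (Set.Icc 0 1))
    (hrpos : ∀ p ∈ Set.Icc (0:ℝ) 1, 0 < r p)
    (γ : ℝ) (hγ : 0 < γ)
    (hbound : ∀ p ∈ Set.Icc (0:ℝ) 1, r p + ∫ x in (1 - p)..1, (1 - x) / r x ≤ γ) :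
    ∃ f : ℝ → ℝ, ContinuousOn f (Set.Icc 0 1) ∧
      (∀ p ∈ Set.Icc (0:ℝ) 1, 0 < f p) ∧
      (∀ p ∈ Set.Icc (0:ℝ) 1, f p + ∫ x in (1 - p)..1, (1 - x) / f x = γ) := by
  classical
  -- minimum of r on [0,1]
  obtain ⟨z, hz, hzmin⟩ := isCompact_Icc.exists_isMinOn (Set.nonempty_Icc.mpr zero_le_one) hrc
  set m : ℝ := r z with hm_def
  have hm : 0 < m := hrpos z hz
  have hrm : ∀ p ∈ Set.Icc (0:ℝ) 1, m ≤ r p := fun p hp => hzmin hp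
  set f : ℕ → ℝ → ℝ := OCseq r γ with hf_def
  have hf0 : ∀ p, f 0 p = r (OCclamp p) := fun p => rfl
  have hfS : ∀ n p, f (n+1) p = γ - ∫ x in (1 - OCclamp p)..1, (1 - x) / f n x :=
    fun n p => rfl
  -- basic facts about 1 - OCclamp p
  have hcl : ∀ p : ℝ, (1 - OCclamp p) ∈ Set.Icc (0:ℝ) 1 := by
    intro p
    have := OCclamp_mem p
    constructor <;> [linarith [this.2]; linarith [this.1]]
  have hsub : ∀ p : ℝ, Set.Icc (1 - OCclamp p) 1 ⊆ Set.Icc (0:ℝ) 1 := by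
    intro p x hx
    exact ⟨le_trans (hcl p).1 hx.1, hx.2⟩
  -- the key induction
  have key : ∀ n, Continuous (f n) ∧ (∀ p, m ≤ f n p) ∧ (∀ p, f n p ≤ γ)
      ∧ (∀ p, f n p ≤ f (n+1) p) := by
    intro n
    induction n with
    | zero =>
      have hc0 : Continuous (f 0) := hrc.comp_continuous OCclamp_cont OCclamp_mem
      have hl0 : ∀ p, m ≤ f 0 p := fun p => hrm _ (OCclamp_mem p)
      have hrγ : ∀ p ∈ Set.Icc (0:ℝ) 1, r p ≤ γ := by
        intro p hp
        have hint : 0 ≤ ∫ x in (1 - p)..1, (1 - x) / r x := by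
          apply intervalIntegral.integral_nonneg (by linarith [hp.1])
          intro u hu
          have hu' : u ∈ Set.Icc (0:ℝ) 1 := ⟨le_trans (by linarith [hp.2]) hu.1, hu.2⟩
          exact div_nonneg (by linarith [hu.2]) (le_of_lt (hrpos u hu'))
        linarith [hbound p hp]
      have hu0 : ∀ p, f 0 p ≤ γ := fun p => hrγ _ (OCclamp_mem p)
      refine ⟨hc0, hl0, hu0, ?_⟩
      intro p
      -- f 0 p = r (OCclamp p) ≤ γ - ∫ ... by hbound at OCclamp p
      have hcp := OCclamp_mem p
      have hb := hbound _ hcp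
      have hcong : (∫ x in (1 - OCclamp p)..1, (1 - x) / r x)
          = ∫ x in (1 - OCclamp p)..1, (1 - x) / f 0 x := by
        apply intervalIntegral.integral_congr
        intro x hx
        rw [Set.uIcc_of_le (by linarith [hcp.1])] at hx
        have hx' := hsub p hx
        simp only [hf0, OCclamp_eq hx']
      rw [hfS, hf0]
      rw [hcong] at hb
      linarith
    | succ n ih =>
      obtain ⟨ihc, ihl, ihu, ihmono⟩ := ih
      have hne : ∀ x, f n x ≠ 0 := fun x => ne_of_gt (lt_of_lt_of_le hm (ihl x))
      have hgc : Continuous fun x => (1 - x) / f n x :=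
        (continuous_const.sub continuous_id).div ihc hne
      have hint : ∀ a b : ℝ, IntervalIntegrable (fun x => (1 - x) / f n x) volume a b :=
        fun a b => hgc.intervalIntegrable a b
      -- continuity of f (n+1)
      have hGc : Continuous fun t => ∫ x in t..1, (1 - x) / f n x := by
        have h1 : Continuous fun t => ∫ x in (1:ℝ)..t, (1 - x) / f n x :=
          intervalIntegral.continuous_primitive hint 1
        have : (fun t => ∫ x in t..1, (1 - x) / f n x)
            = fun t => -∫ x in (1:ℝ)..t, (1 - x) / f n x := by
          funext t
          rw [intervalIntegral.integral_symm]
        rw [this]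
        exact h1.neg
      have hcS : Continuous (f (n+1)) := by
        have : f (n+1) = fun p =>
            γ - (fun t => ∫ x in t..1, (1 - x) / f n x) (1 - OCclamp p) := by
          funext p; exact hfS n p
        rw [this]
        exact continuous_const.sub (hGc.comp (continuous_const.sub OCclamp_cont))
      have hlS : ∀ p, m ≤ f (n+1) p := fun p => le_trans (ihl p) (ihmono p)
      have hneS : ∀ x, f (n+1) x ≠ 0 := fun x => ne_of_gt (lt_of_lt_of_le hm (hlS x))
      have huS : ∀ p, f (n+1) p ≤ γ := by
        intro p
        rw [hfS]
        have hnonneg : 0 ≤ ∫ x in (1 - OCclamp p)..1, (1 - x) / f n x := by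
          apply intervalIntegral.integral_nonneg (by linarith [(OCclamp_mem p).1])
          intro u hu
          exact div_nonneg (by linarith [hu.2]) (le_of_lt (lt_of_lt_of_le hm (ihl u)))
        linarith
      refine ⟨hcS, hlS, huS, ?_⟩
      intro p
      rw [hfS, hfS]
      have hmono2 : (∫ x in (1 - OCclamp p)..1, (1 - x) / f (n+1) x)
          ≤ ∫ x in (1 - OCclamp p)..1, (1 - x) / f n x := by
        apply intervalIntegral.integral_mono_on (by linarith [(OCclamp_mem p).1])
        · exact ((continuous_const.sub continuous_id).div hcS hneS).intervalIntegrable _ _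
        · exact hint _ _
        · intro x hx
          have h1x : 0 ≤ 1 - x := by linarith [hx.2]
          exact div_le_div_of_nonneg_left h1x (lt_of_lt_of_le hm (ihl x)) (ihmono x)
      linarith
  -- the limit function
  set F : ℝ → ℝ := fun p => ⨆ n, f n p with hF_def
  have hbdd : ∀ p, BddAbove (Set.range fun n => f n p) :=
    fun p => ⟨γ, by rintro y ⟨n, rfl⟩; exact (key n).2.2.1 p⟩
  have hmono : ∀ p, Monotone fun n => f n p :=
    fun p => monotone_nat_of_le_succ fun n => (key n).2.2.2 p
  have htend : ∀ p, Tendsto (fun n => f n p) atTop (𝓝 (F p)) :=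
    fun p => tendsto_atTop_ciSup (hmono p) (hbdd p)
  have hFm : ∀ p, m ≤ F p := fun p => le_trans ((key 0).2.1 p) (le_ciSup (hbdd p) 0)
  have hFne : ∀ p, F p ≠ 0 := fun p => ne_of_gt (lt_of_lt_of_le hm (hFm p))
  have hFmeas : Measurable F := Measurable.iSup fun n => (key n).1.measurable
  have hgFmeas : Measurable fun x => (1 - x) / F x :=
    (measurable_const.sub measurable_id).div hFmeas
  -- interval integrability of (1-x)/F x
  have hint : ∀ a b : ℝ, IntervalIntegrable (fun x => (1 - x) / F x) volume a b := by
    intro a b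
    rw [intervalIntegrable_iff]
    apply Measure.integrableOn_of_bounded (M := (|1 - a| + |1 - b|) / m)
    · exact (measure_Ioc_lt_top).ne
    · exact hgFmeas.aestronglyMeasurable
    · filter_upwards [ae_restrict_mem measurableSet_uIoc] with x hx
      have hxI : x ∈ Set.Icc (min a b) (max a b) := Ioc_subset_Icc_self hx
      have hnum : |1 - x| ≤ |1 - a| + |1 - b| := by
        rcases le_total a b with h | h
        · rw [min_eq_left h, max_eq_right h] at hxI
          rcases abs_cases (1 - a) with ⟨ha, _⟩ | ⟨ha, _⟩ <;>
            rcases abs_cases (1 - b) with ⟨hb2, _⟩ | ⟨hb2, _⟩ <;>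
            rcases abs_cases (1 - x) with ⟨hx2, _⟩ | ⟨hx2, _⟩ <;>
            nlinarith [hxI.1, hxI.2]
        · rw [min_eq_right h, max_eq_left h] at hxI
          rcases abs_cases (1 - a) with ⟨ha, _⟩ | ⟨ha, _⟩ <;>
            rcases abs_cases (1 - b) with ⟨hb2, _⟩ | ⟨hb2, _⟩ <;>
            rcases abs_cases (1 - x) with ⟨hx2, _⟩ | ⟨hx2, _⟩ <;>
            nlinarith [hxI.1, hxI.2]
      have hFx : 0 < F x := lt_of_lt_of_le hm (hFm x)
      rw [Real.norm_eq_abs, abs_div, abs_of_pos hFx]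
      exact div_le_div₀ (by positivity) hnum hm (hFm x)
  -- the limit equation
  have heq : ∀ p, F p = γ - ∫ x in (1 - OCclamp p)..1, (1 - x) / F x := by
    intro p
    have h1 : Tendsto (fun n => f (n+1) p) atTop (𝓝 (F p)) :=
      (htend p).comp (tendsto_add_atTop_nat 1)
    have h2 : Tendsto (fun n => ∫ x in (1 - OCclamp p)..1, (1 - x) / f n x) atTop
        (𝓝 (∫ x in (1 - OCclamp p)..1, (1 - x) / F x)) := by
      apply intervalIntegral.tendsto_integral_filter_of_dominated_convergence
        (bound := fun _ => 1 / m)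
      · exact Eventually.of_forall fun n =>
          ((continuous_const.sub continuous_id).div (key n).1
            (fun x => ne_of_gt (lt_of_lt_of_le hm ((key n).2.1 x)))).aestronglyMeasurable
      · apply Eventually.of_forall
        intro n
        filter_upwards with x hx
        rw [Set.uIoc_of_le (by linarith [(OCclamp_mem p).1])] at hx
        have hx0 : 0 ≤ x := le_trans (hcl p).1 (le_of_lt hx.1)
        have hfx : 0 < f n x := lt_of_lt_of_le hm ((key n).2.1 x)
        rw [Real.norm_eq_abs, abs_div, abs_of_pos hfx]
        apply div_le_div₀ (by positivity) _ hm ((key n).2.1 x)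
        rw [abs_of_nonneg (by linarith [hx.2])]
        linarith
      · exact intervalIntegrable_const
      · filter_upwards with x _
        exact Tendsto.div tendsto_const_nhds (htend x) (hFne x)
    have h3 : Tendsto (fun n => f (n+1) p) atTop
        (𝓝 (γ - ∫ x in (1 - OCclamp p)..1, (1 - x) / F x)) := by
      simp only [hfS]
      exact tendsto_const_nhds.sub h2
    exact tendsto_nhds_unique h1 h3
  -- continuity of F
  have hGc : Continuous fun t => ∫ x in t..1, (1 - x) / F x := by
    have h1 : Continuous fun t => ∫ x in (1:ℝ)..t, (1 - x) / F x :=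
      intervalIntegral.continuous_primitive hint 1
    have : (fun t => ∫ x in t..1, (1 - x) / F x)
        = fun t => -∫ x in (1:ℝ)..t, (1 - x) / F x := by
      funext t
      rw [intervalIntegral.integral_symm]
    rw [this]
    exact h1.neg
  have hFcont : Continuous F := by
    have : F = fun p => γ - (fun t => ∫ x in t..1, (1 - x) / F x) (1 - OCclamp p) :=
      funext heq
    rw [this]
    exact continuous_const.sub (hGc.comp (continuous_const.sub OCclamp_cont))
  refine ⟨F, hFcont.continuousOn, fun p _ => lt_of_lt_of_le hm (hFm p), ?_⟩
  intro p hp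
  have := heq p
  rw [OCclamp_eq hp] at this
  linarith
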